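/- A finite-dimensional commutative Frobenius algebra (A, f) over a field of characteristic 0 contains a field as a direct summand if and only if e_{A,f}² ≠ 0. -/

import Mathlib

open LinearMap in
private lemma euler_trace_formula (K A : Type) [Field K]
    [CommRing A] [Algebra K A] [FiniteDimensional K A]
    (f : A →ₗ[K] K)
    (ι : Type) [Fintype ι] [DecidableEq ι] (e : Module.Basis ι K A) (d : ι → A)
    (hd : ∀ i j, f (e i * d j) = if i = j then (1 : K) else 0) (a : A) :
    f ((∑ i, e i * d i) * a) = LinearMap.trace K A (LinearMap.mulLeft K a) := by
  have hrepr : ∀ (x : A) (i : ι), f (x * d i) = e.repr x i := by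
    intro x i
    conv_lhs => rw [← e.sum_repr x]
    rw [Finset.sum_mul, map_sum]
    have : ∀ j, f (e.repr x j • e j * d i) = e.repr x j * (if j = i then (1:K) else 0) := by
      intro j
      rw [smul_mul_assoc, map_smul, hd, smul_eq_mul]
    simp_rw [this]
    simp
  rw [LinearMap.trace_eq_matrix_trace K e, Matrix.trace]
  rw [Finset.sum_mul, map_sum]
  apply Finset.sum_congr rfl
  intro i _
  rw [Matrix.diag_apply, LinearMap.toMatrix_apply, LinearMap.mulLeft_apply, ← hrepr]
  ring_nf

/-- A finite-dimensional commutative Frobenius algebra over a field of characteristic 0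
contains a field as a direct summand iff the square of its Euler class is nonzero. -/
theorem field_factor_iff_euler_sq_ne_zero (K A : Type) [Field K] [CharZero K]
    [CommRing A] [Algebra K A] [FiniteDimensional K A]
    (f : A →ₗ[K] K)
    (hf : ∀ a : A, (∀ b : A, f (a * b) = 0) → a = 0)
    (ι : Type) [Fintype ι] [DecidableEq ι] (e : Module.Basis ι K A) (d : ι → A)
    (hd : ∀ i j, f (e i * d j) = if i = j then (1 : K) else 0) :
    (∃ (F A' : Type) (iF : Field F) (iA' : CommRing A')
        (aF : Algebra K F) (aA' : Algebra K A'),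
        Nonempty (A ≃ₐ[K] F × A')) ↔ (∑ i, e i * d i) * (∑ i, e i * d i) ≠ 0 := by
  set E : A := ∑ i, e i * d i with hEdef
  have hT : ∀ a : A, f (E * a) = LinearMap.trace K A (LinearMap.mulLeft K a) :=
    euler_trace_formula K A f ι e d hd
  constructor
  · -- field factor → E² ≠ 0
    rintro ⟨F, A', iF, iA', aF, aA', ⟨φ⟩⟩ hsq
    haveI : Module.Finite K (F × A') := Module.Finite.equiv (φ.toLinearEquiv : A ≃ₗ[K] (F × A'))
    haveI : Module.Finite K F :=
      Module.Finite.of_surjective (LinearMap.fst K F A') Prod.fst_surjective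
    haveI : Module.Finite K A' :=
      Module.Finite.of_surjective (LinearMap.snd K F A') Prod.snd_surjective
    set ε : A := φ.symm (1, 0) with hε
    have key : f (E * ε) = (Module.finrank K F : K) := by
      rw [hT]
      have hconj : LinearMap.mulLeft K ((1, 0) : F × A') =
          φ.toLinearEquiv.conj (LinearMap.mulLeft K ε) := by
        apply LinearMap.ext
        intro x
        rw [LinearEquiv.conj_apply]
        show (1, 0) * x = φ (ε * φ.symm x)
        rw [map_mul, hε, AlgEquiv.apply_symm_apply, AlgEquiv.apply_symm_apply]
      have h1 : LinearMap.trace K A (LinearMap.mulLeft K ε)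
          = LinearMap.trace K (F × A') (LinearMap.mulLeft K ((1, 0) : F × A')) := by
        rw [hconj, LinearMap.trace_conj']
      have h2 : LinearMap.mulLeft K ((1, 0) : F × A') =
          LinearMap.prodMap (LinearMap.id : F →ₗ[K] F) (0 : A' →ₗ[K] A') := by
        apply LinearMap.ext
        intro z
        simp [LinearMap.mulLeft_apply, Prod.mul_def]
      rw [h1, h2, LinearMap.trace_prodMap', LinearMap.trace_id, map_zero, add_zero]
    have hfr : ((Module.finrank K F : K)) ≠ 0 := by
      have : 0 < Module.finrank K F := Module.finrank_pos
      exact_mod_cast Nat.cast_ne_zero.mpr this.ne'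
    have hne : E * ε ≠ 0 := by
      intro h0
      rw [h0, map_zero] at key
      exact hfr key.symm
    have hu : (φ E).1 ≠ 0 := by
      intro h0
      apply hne
      have : φ (E * ε) = 0 := by
        rw [map_mul, hε, AlgEquiv.apply_symm_apply, Prod.mul_def]
        ext
        · simp [h0]
        · simp
      simpa using φ.injective (this.trans (map_zero φ).symm)
    have : (φ (E * E)).1 = (φ E).1 * (φ E).1 := by rw [map_mul]; rfl
    rw [hsq, map_zero] at this
    exact hu (mul_self_eq_zero.mp this.symm)
  · -- E² ≠ 0 → field factor
    intro hsq
    haveI : IsArtinianRing A := IsArtinianRing.of_finite K A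
    haveI : IsNoetherianRing A := isNoetherian_of_tower K inferInstance
    have hnil : ∀ a : A, IsNilpotent a → E * a = 0 := by
      intro a ha
      apply hf
      intro b
      rw [mul_assoc, hT]
      have hn : IsNilpotent (LinearMap.mulLeft K (a * b)) := by
        obtain ⟨n, hn⟩ := ha
        exact ⟨n, by rw [LinearMap.pow_mulLeft, mul_pow, hn, zero_mul,
          LinearMap.mulLeft_zero_eq_zero]⟩
      exact (LinearMap.isNilpotent_trace_of_isNilpotent hn).eq_zero
    have hEE : ¬ IsNilpotent (E * E) := by
      intro hnn
      apply hsq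
      have hE3 : E ^ 3 = 0 := by
        have := hnil _ hnn
        calc E ^ 3 = E * (E * E) := by ring
        _ = 0 := this
      apply hf
      intro b
      rw [mul_assoc, hT]
      have hn : IsNilpotent (LinearMap.mulLeft K (E * b)) := by
        refine ⟨3, ?_⟩
        rw [LinearMap.pow_mulLeft, mul_pow, hE3, zero_mul, LinearMap.mulLeft_zero_eq_zero]
      exact (LinearMap.isNilpotent_trace_of_isNilpotent hn).eq_zero
    obtain ⟨p, hpPrime, hpE⟩ : ∃ p : Ideal A, p.IsPrime ∧ E * E ∉ p := by
      by_contra hcon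
      push_neg at hcon
      exact hEE (nilpotent_iff_mem_prime.mpr fun J hJ => hcon J hJ)
    haveI := hpPrime
    haveI hpMax : p.IsMaximal := IsArtinianRing.isMaximal_of_isPrime p
    -- stabilization of powers of p
    obtain ⟨n, hn⟩ := IsArtinian.monotone_stabilizes (R := A) (M := A)
      ⟨fun k => OrderDual.toDual (p ^ k), fun i j hij => Ideal.pow_le_pow_right hij⟩
    set I : Ideal A := p ^ (n + 1) with hI
    have hpow : ∀ m, n ≤ m → p ^ m = p ^ n := fun m hm =>
      (OrderDual.toDual_inj.mp (hn m hm)).symm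
    have hIdem : IsIdempotentElem I := by
      show I * I = I
      rw [hI, ← pow_add, hpow (n + 1 + (n + 1)) (by omega), hpow (n + 1) (by omega)]
    obtain ⟨e₀, he₀, hIspan⟩ :=
      (Ideal.isIdempotentElem_iff_of_fg I (IsNoetherian.noetherian I)).mp hIdem
    have he₀I : e₀ ∈ I := by rw [hIspan]; exact Submodule.mem_span_singleton_self e₀
    have hIp : I ≤ p := Ideal.pow_le_self (Nat.succ_ne_zero n)
    -- E * p ⊆ I
    have hEp : ∀ a ∈ p, E * a ∈ I := by
      intro a ha
      have h1 : IsNilpotent (a * (1 - e₀)) := by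
        refine ⟨n + 1, ?_⟩
        rw [mul_pow, he₀.one_sub.pow_succ_eq]
        have h3 : a ^ (n + 1) ∈ I := Ideal.pow_mem_pow ha (n + 1)
        rw [hIspan] at h3
        obtain ⟨c, hc⟩ := Submodule.mem_span_singleton.mp h3
        rw [← hc, smul_eq_mul]
        linear_combination (-c) * he₀.eq
      have h4 : E * (a * (1 - e₀)) = 0 := hnil _ h1
      have h5 : E * a = (E * a) * e₀ := by linear_combination h4
      rw [h5]
      exact I.mul_mem_left (E * a) he₀I
    have hEnp : E ∉ p := fun h => hpE (p.mul_mem_left E h)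
    obtain ⟨y, c, hc, hyc⟩ := hpMax.exists_inv hEnp
    -- p ≤ I ⊔ p^k for all k
    have claim : ∀ k : ℕ, p ≤ I ⊔ p ^ k := by
      intro k
      induction k with
      | zero => rw [pow_zero, Ideal.one_eq_top]; exact le_sup_of_le_right le_top
      | succ k ih =>
        intro x hx
        obtain ⟨i, hi, z, hz, hizx⟩ := Submodule.mem_sup.mp (ih hx)
        have hx' : x = (y * (E * x) + c * i) + c * z := by
          have : x * (y * E + c) = x * 1 := by rw [hyc]
          calc x = x * 1 := (mul_one x).symm
          _ = y * (E * x) + c * (i + z) := by rw [← this, hizx]; ring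
          _ = (y * (E * x) + c * i) + c * z := by ring
        rw [hx']
        refine Submodule.add_mem _ (Submodule.mem_sup_left ?_) (Submodule.mem_sup_right ?_)
        · exact add_mem (I.mul_mem_left y (hEp x hx)) (I.mul_mem_left c hi)
        · rw [pow_succ']
          exact Ideal.mul_mem_mul hc hz
    have hpI : p ≤ I := by
      have h := claim (n + 1)
      rwa [← hI, sup_idem] at h
    have hpeq : p = I := le_antisymm hpI hIp
    -- Build the splitting
    set J : Ideal A := Ideal.span {1 - e₀} with hJ
    have he₀p : e₀ ∈ p := hpeq ▸ he₀I
    set g : A →ₐ[K] (A ⧸ p) × (A ⧸ J) :=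
      (Ideal.Quotient.mkₐ K p).prod (Ideal.Quotient.mkₐ K J) with hg
    have hinj : Function.Injective g := by
      intro x₁ x₂ hx
      have h0 : g (x₁ - x₂) = 0 := by rw [map_sub, hx, sub_self]
      set w := x₁ - x₂ with hw
      have hwp : w ∈ p := by
        have := congrArg Prod.fst h0
        simp only [hg, AlgHom.prod_apply, Ideal.Quotient.mkₐ_eq_mk] at this
        exact Ideal.Quotient.eq_zero_iff_mem.mp this
      have hwJ : w ∈ J := by
        have := congrArg Prod.snd h0
        simp only [hg, AlgHom.prod_apply, Ideal.Quotient.mkₐ_eq_mk] at this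
        exact Ideal.Quotient.eq_zero_iff_mem.mp this
      rw [hpeq, hIspan] at hwp
      obtain ⟨a, ha⟩ := Submodule.mem_span_singleton.mp hwp
      obtain ⟨b, hb⟩ := Ideal.mem_span_singleton'.mp hwJ
      rw [smul_eq_mul] at ha
      have h1 : w * e₀ = w := by rw [← ha]; linear_combination a * he₀.eq
      have h2 : w * e₀ = 0 := by rw [← hb]; linear_combination (-b) * he₀.eq
      have : w = 0 := by rw [← h1, h2]
      exact sub_eq_zero.mp this
    have hsurj : Function.Surjective g := by
      rintro ⟨u, v⟩
      obtain ⟨x, rfl⟩ := Ideal.Quotient.mk_surjective u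
      obtain ⟨y', rfl⟩ := Ideal.Quotient.mk_surjective v
      refine ⟨x * (1 - e₀) + y' * e₀, ?_⟩
      have hm1 : Ideal.Quotient.mk p (x * (1 - e₀) + y' * e₀) = Ideal.Quotient.mk p x := by
        rw [Ideal.Quotient.eq]
        have : x * (1 - e₀) + y' * e₀ - x = (y' - x) * e₀ := by ring
        rw [this]
        exact p.mul_mem_left _ he₀p
      have hm2 : Ideal.Quotient.mk J (x * (1 - e₀) + y' * e₀) = Ideal.Quotient.mk J y' := by
        rw [Ideal.Quotient.eq]
        have hmem : x * (1 - e₀) + y' * e₀ - y' = (x - y') * (1 - e₀) := by ring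
        rw [hmem, hJ]
        exact Ideal.mul_mem_left _ _ (Ideal.subset_span rfl)
      simp only [hg, AlgHom.prod_apply, Ideal.Quotient.mkₐ_eq_mk, hm1, hm2]
    letI : Field (A ⧸ p) := Ideal.Quotient.field p
    exact ⟨A ⧸ p, A ⧸ J, inferInstance, inferInstance, inferInstance, inferInstance,
      ⟨AlgEquiv.ofBijective g ⟨hinj, hsurj⟩⟩⟩
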